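/- Let N be a positive integer and let C be an N×N matrix with integer entries. Then C is anti-symmetric and has rank 2 if and only if there exists a 2×N matrix B with integer entries such that B has rank 2 and C = Bᵀ·J·B. -/

import Mathlib

open Matrix Module

/-- The 2×2 integer matrix `[[0,1],[-1,0]]`. -/
def Jmat : Matrix (Fin 2) (Fin 2) ℤ := !![0, 1; -1, 0]




noncomputable section

-- the cast linear map
def castL (N : ℕ) : (Fin N → ℤ) →ₗ[ℤ] (Fin N → ℚ) where
  toFun x i := (x i : ℚ)
  map_add' x y := by funext i; simp
  map_smul' z x := by funext i; simp

lemma castL_inj (N : ℕ) : Function.Injective (castL N) := by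
  intro x y h
  funext i
  exact Int.cast_injective (congrFun h i)

lemma mulVec_cast {m n : ℕ} (A : Matrix (Fin m) (Fin n) ℤ) (t : Fin n → ℤ) :
    (A.map (Int.cast : ℤ → ℚ)).mulVec (fun j => (t j : ℚ)) = fun i => ((A.mulVec t) i : ℚ) := by
  funext i
  simp [Matrix.mulVec, dotProduct]

lemma surj_of_rank' {m n : ℕ} (A : Matrix (Fin m) (Fin n) ℚ) (h : A.rank = m) :
    Function.Surjective A.mulVecLin := by
  rw [← LinearMap.range_eq_top]
  apply Submodule.eq_top_of_finrank_eq
  rw [Module.finrank_fin_fun]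
  exact h

lemma rank_mul_of_surj' {l m n : ℕ} (X : Matrix (Fin l) (Fin m) ℚ) (Y : Matrix (Fin m) (Fin n) ℚ)
    (h : Function.Surjective Y.mulVecLin) : (X * Y).rank = X.rank := by
  unfold Matrix.rank
  rw [mulVecLin_mul, LinearMap.range_comp, LinearMap.range_eq_top.2 h, Submodule.map_top]

lemma surj_of_rightInv {m n : ℕ} (A : Matrix (Fin m) (Fin n) ℚ) (S : Matrix (Fin n) (Fin m) ℚ)
    (h : A * S = 1) : Function.Surjective A.mulVecLin := by
  intro x
  refine ⟨S.mulVec x, ?_⟩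
  simp [Matrix.mulVecLin_apply, Matrix.mulVec_mulVec, h]

lemma map_mul' {l m n : ℕ} (A : Matrix (Fin l) (Fin m) ℤ) (B : Matrix (Fin m) (Fin n) ℤ) :
    (A * B).map (Int.cast : ℤ → ℚ) =
      (A.map Int.cast : Matrix (Fin l) (Fin m) ℚ) * (B.map Int.cast : Matrix (Fin m) (Fin n) ℚ) := by
  ext i j
  simp [Matrix.mul_apply]

lemma rank_of_rightInv {m n : ℕ} (A : Matrix (Fin m) (Fin n) ℚ) (S : Matrix (Fin n) (Fin m) ℚ)
    (h : A * S = 1) : A.rank = m := by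
  have h2 : LinearMap.range A.mulVecLin = ⊤ := LinearMap.range_eq_top.2 (surj_of_rightInv A S h)
  show Module.finrank ℚ (LinearMap.range A.mulVecLin) = m
  rw [h2, finrank_top, Module.finrank_fin_fun]



theorem forward_dir (N : ℕ) (C : Matrix (Fin N) (Fin N) ℤ)
    (hanti : Cᵀ = -C) (hrank : (C.map (Int.cast : ℤ → ℚ)).rank = 2) :
    ∃ B : Matrix (Fin 2) (Fin N) ℤ,
      (B.map (Int.cast : ℤ → ℚ)).rank = 2 ∧ C = Bᵀ * Jmat * B := by
  classical
  set M : Submodule ℤ (Fin N → ℤ) := LinearMap.range C.mulVecLin with hM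
  obtain ⟨k, bb⟩ := Submodule.basisOfPid (Pi.basisFun ℤ (Fin N)) M
  -- the casted basis vectors
  set v : Fin k → (Fin N → ℚ) := fun a => castL N (bb a : Fin N → ℤ) with hv
  have hvind : LinearIndependent ℚ v := by
    have h1 : LinearIndependent ℤ (fun a => ((bb a : Fin N → ℤ))) :=
      bb.linearIndependent.map' M.subtype (Submodule.ker_subtype M)
    have h2 : LinearIndependent ℤ v := h1.map' (castL N) (LinearMap.ker_eq_bot.2 (castL_inj N))
    exact (LinearIndependent.iff_fractionRing ℤ ℚ).1 h2
  have hspan1 : Submodule.span ℚ (Set.range v) ≤ LinearMap.range (C.map (Int.cast : ℤ → ℚ)).mulVecLin := by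
    rw [Submodule.span_le]
    rintro _ ⟨a, rfl⟩
    simp only [SetLike.mem_coe]
    have hmem : (bb a : Fin N → ℤ) ∈ M := (bb a).2
    obtain ⟨t, ht⟩ := hmem
    refine ⟨fun j => (t j : ℚ), ?_⟩
    rw [Matrix.mulVecLin_apply, mulVec_cast]
    rw [Matrix.mulVecLin_apply] at ht
    rw [ht]
    rfl
  have hspan2 : LinearMap.range (C.map (Int.cast : ℤ → ℚ)).mulVecLin ≤ Submodule.span ℚ (Set.range v) := by
    rw [Matrix.range_mulVecLin, Submodule.span_le]
    rintro _ ⟨j, rfl⟩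
    simp only [SetLike.mem_coe]
    have hmem : Cᵀ j ∈ M := by
      show Cᵀ j ∈ LinearMap.range C.mulVecLin
      rw [Matrix.range_mulVecLin]
      exact Submodule.subset_span ⟨j, rfl⟩
    set r : Fin k → ℤ := fun a => bb.repr ⟨Cᵀ j, hmem⟩ a with hr
    have hval : ((∑ a, r a • bb a : M) : Fin N → ℤ) = ∑ a, r a • (bb a : Fin N → ℤ) := by
      simp
    have hcol : (C.map (Int.cast : ℤ → ℚ))ᵀ j = castL N (Cᵀ j) := rfl
    have hrep : (⟨Cᵀ j, hmem⟩ : M) = ∑ a, r a • bb a := (bb.sum_repr ⟨Cᵀ j, hmem⟩).symm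
    have : castL N (Cᵀ j) = ∑ a, ((r a : ℚ)) • v a := by
      have h0 : Cᵀ j = ((∑ a, r a • bb a : M) : Fin N → ℤ) := congrArg Subtype.val hrep
      rw [h0, hval, map_sum]
      refine Finset.sum_congr rfl fun a _ => ?_
      rw [LinearMap.map_smul, Int.cast_smul_eq_zsmul]
    rw [show (C.map (Int.cast : ℤ → ℚ)).col j = castL N (Cᵀ j) from hcol, this]
    exact Submodule.sum_mem _ fun a _ => Submodule.smul_mem _ _ (Submodule.subset_span ⟨a, rfl⟩)
  have hk : k = 2 := by
    have e1 : finrank ℚ (Submodule.span ℚ (Set.range v)) = k := by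
      rw [finrank_span_eq_card hvind, Fintype.card_fin]
    have e2 : finrank ℚ (LinearMap.range (C.map (Int.cast : ℤ → ℚ)).mulVecLin) = 2 := hrank
    have i1 := Submodule.finrank_mono hspan1
    have i2 := Submodule.finrank_mono hspan2
    omega
  subst hk
  -- matrices E and B
  set E : Matrix (Fin N) (Fin 2) ℤ := fun i a => (bb a : Fin N → ℤ) i with hE
  have hmemcol : ∀ j, Cᵀ j ∈ M := by
    intro j
    show Cᵀ j ∈ LinearMap.range C.mulVecLin
    rw [Matrix.range_mulVecLin]
    exact Submodule.subset_span ⟨j, rfl⟩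
  set B : Matrix (Fin 2) (Fin N) ℤ := fun a j => bb.repr ⟨Cᵀ j, hmemcol j⟩ a with hB
  have hEmv : ∀ y : Fin 2 → ℤ, E.mulVec y = ((∑ a, y a • bb a : M) : Fin N → ℤ) := by
    intro y
    funext i
    simp [Matrix.mulVec, dotProduct, hE, mul_comm]
  have hEB : C = E * B := by
    ext i j
    have h0 : Cᵀ j = ((∑ a, B a j • bb a : M) : Fin N → ℤ) :=
      congrArg Subtype.val (bb.sum_repr ⟨Cᵀ j, hmemcol j⟩).symm
    have h1 : C i j = Cᵀ j i := rfl
    rw [h1, h0, ← hEmv (fun a => B a j)]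
    simp [Matrix.mul_apply, Matrix.mulVec, dotProduct]
  have hBsurj : ∀ x : Fin 2 → ℤ, ∃ t, B.mulVec t = x := by
    intro x
    have hmem : ((∑ a, x a • bb a : M) : Fin N → ℤ) ∈ M := (∑ a, x a • bb a : M).2
    obtain ⟨t, ht⟩ := hmem
    refine ⟨t, ?_⟩
    have h1 : C.mulVec t = E.mulVec (B.mulVec t) := by
      rw [hEB, Matrix.mulVec_mulVec]
    have h2 : ((∑ a, (B.mulVec t) a • bb a : M) : Fin N → ℤ)
        = ((∑ a, x a • bb a : M) : Fin N → ℤ) := by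
      rw [← hEmv, ← h1]
      exact ht
    have h3 : (∑ a, (B.mulVec t) a • bb a : M) = ∑ a, x a • bb a := Subtype.ext h2
    calc B.mulVec t = bb.repr (∑ a, (B.mulVec t) a • bb a) := (bb.repr_sum_self _).symm
    _ = x := by rw [h3, bb.repr_sum_self]
  choose s hs using hBsurj
  set S : Matrix (Fin N) (Fin 2) ℤ := fun j a => s (Pi.single a 1) j with hS
  have hBS : B * S = 1 := by
    ext a b
    have h1 : (B * S) a b = (B.mulVec (s (Pi.single b 1))) a := by
      simp [Matrix.mul_apply, Matrix.mulVec, dotProduct, hS]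
      rfl
    rw [h1, hs, Matrix.one_apply, Pi.single_apply]
  have hC2 : C = Bᵀ * (-Eᵀ) := by
    have h1 : Cᵀ = Bᵀ * Eᵀ := by rw [hEB, Matrix.transpose_mul]
    calc C = -Cᵀ := by rw [hanti, neg_neg]
    _ = -(Bᵀ * Eᵀ) := by rw [h1]
    _ = Bᵀ * (-Eᵀ) := by rw [Matrix.mul_neg]
  have hbbrange : ∀ a : Fin 2, ∃ p : Fin 2 → ℤ, Bᵀ.mulVec p = (bb a : Fin N → ℤ) := by
    intro a
    obtain ⟨t, ht⟩ := (bb a).2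
    refine ⟨(-Eᵀ).mulVec t, ?_⟩
    rw [Matrix.mulVec_mulVec, ← hC2]
    exact ht
  choose p hp using hbbrange
  set A : Matrix (Fin 2) (Fin 2) ℤ := fun i a => p a i with hA
  have hEA : E = Bᵀ * A := by
    ext i a
    have h1 := congrFun (hp a) i
    have h2 : (Bᵀ * A) i a = (Bᵀ.mulVec (p a)) i := by
      simp [Matrix.mul_apply, Matrix.mulVec, dotProduct, hA]
      change ∑ x, B x i * p a x = _
      simp [Fin.sum_univ_two]
    rw [h2, h1]
  have hCA : C = Bᵀ * A * B := by rw [hEB, hEA]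
  have hA1 : A = Sᵀ * C * S := by
    rw [hCA]
    calc A = 1ᵀ * A * 1 := by simp
    _ = (B * S)ᵀ * A * (B * S) := by rw [hBS]
    _ = Sᵀ * (Bᵀ * A * B) * S := by
        rw [Matrix.transpose_mul]
        simp only [Matrix.mul_assoc]
  have hAanti : Aᵀ = -A := by
    rw [hA1, Matrix.transpose_mul, Matrix.transpose_mul, Matrix.transpose_transpose, hanti]
    simp only [Matrix.neg_mul, Matrix.mul_neg, Matrix.mul_assoc]
  have e : ∀ i b : Fin 2, A b i = -A i b := by
    intro i b
    have h1 := congrFun (congrFun hAanti i) b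
    simpa using h1
  set a0 : ℤ := A 0 1 with ha0
  have hAJ : A = a0 • Jmat := by
    have h00 : A 0 0 = 0 := by have h1 := e 0 0; omega
    have h11 : A 1 1 = 0 := by have h1 := e 1 1; omega
    have h10 : A 1 0 = -a0 := by have h1 := e 0 1; omega
    ext i b
    fin_cases i <;> fin_cases b <;>
      simp [Jmat, h00, h11, h10, ← ha0, Matrix.smul_apply, smul_eq_mul, mul_neg, mul_one]
  have ha0ne : a0 ≠ 0 := by
    intro h
    rw [h, zero_smul] at hAJ
    rw [hAJ, Matrix.mul_zero, Matrix.zero_mul] at hCA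
    rw [hCA] at hrank
    have : ((0 : Matrix (Fin N) (Fin N) ℤ).map (Int.cast : ℤ → ℚ)) = 0 := by
      ext i j; simp
    rw [this, Matrix.rank_zero] at hrank
    omega
  set D : Matrix (Fin 2) (Fin 2) ℤ := !![a0, 0; 0, 1] with hD
  have hDT : Dᵀ = D := by
    ext i b
    fin_cases i <;> fin_cases b <;> simp [hD]
  have hDJD : Dᵀ * Jmat * D = a0 • Jmat := by
    rw [hDT]
    ext i b
    fin_cases i <;> fin_cases b <;>
      simp [hD, Jmat, Matrix.mul_apply, Fin.sum_univ_two]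
  refine ⟨D * B, ?_, ?_⟩
  · -- rank
    have hBq : (B.map (Int.cast : ℤ → ℚ)) * (S.map (Int.cast : ℤ → ℚ)) = 1 := by
      rw [← map_mul', hBS]
      ext i j
      simp [Matrix.one_apply]
    have hBqs : Function.Surjective (B.map (Int.cast : ℤ → ℚ)).mulVecLin :=
      surj_of_rightInv _ _ hBq
    have hDq : (D.map (Int.cast : ℤ → ℚ)) * !![(a0 : ℚ)⁻¹, 0; 0, 1] = 1 := by
      ext i j
      fin_cases i <;> fin_cases j <;>
        simp [hD, Matrix.mul_apply, Fin.sum_univ_two,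
          mul_inv_cancel₀ (Int.cast_ne_zero.2 ha0ne : (a0 : ℚ) ≠ 0)]
    rw [map_mul', rank_mul_of_surj' _ _ hBqs, rank_of_rightInv _ _ hDq]
  · rw [hCA, hAJ, ← hDJD, Matrix.transpose_mul]
    simp only [Matrix.mul_assoc]

theorem backward_dir (N : ℕ) (C : Matrix (Fin N) (Fin N) ℤ)
    (B : Matrix (Fin 2) (Fin N) ℤ)
    (hB : (B.map (Int.cast : ℤ → ℚ)).rank = 2) (hC : C = Bᵀ * Jmat * B) :
    Cᵀ = -C ∧ (C.map (Int.cast : ℤ → ℚ)).rank = 2 := by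
  subst hC
  constructor
  · have hJ : Jmatᵀ = -Jmat := by decide
    rw [Matrix.transpose_mul, Matrix.transpose_mul, transpose_transpose, hJ]
    rw [Matrix.mul_assoc, Matrix.neg_mul, Matrix.mul_neg]
  · set Bq := B.map (Int.cast : ℤ → ℚ) with hBq
    have hJinv : (Jmat.map (Int.cast : ℤ → ℚ)) * ((-Jmat).map Int.cast) = 1 := by
      ext i j; fin_cases i <;> fin_cases j <;> simp [Jmat, Matrix.mul_apply, Fin.sum_univ_two]
    have hJs : Function.Surjective (Jmat.map (Int.cast : ℤ → ℚ)).mulVecLin :=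
      surj_of_rightInv _ _ hJinv
    have hBs : Function.Surjective Bq.mulVecLin := surj_of_rank' Bq hB
    have hmap : (Bᵀ * Jmat * B).map (Int.cast : ℤ → ℚ)
        = Bqᵀ * ((Jmat.map Int.cast : Matrix (Fin 2) (Fin 2) ℚ) * Bq) := by
      rw [map_mul', map_mul']
      rw [Matrix.mul_assoc]
      rfl
    have hsurj : Function.Surjective (Jmat.map (Int.cast : ℤ → ℚ) * Bq).mulVecLin := by
      intro x
      obtain ⟨y, hy⟩ := hJs x
      obtain ⟨z, hz⟩ := hBs y
      refine ⟨z, ?_⟩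
      rw [Matrix.mulVecLin_apply] at *
      rw [← Matrix.mulVec_mulVec, hz, hy]
    rw [hmap, rank_mul_of_surj' _ _ hsurj, Matrix.rank_transpose]
    exact hB

end

/-- An `N×N` integer matrix `C` is anti-symmetric of rank 2 (over `ℚ`)
iff `C = Bᵀ·J·B` for some `2×N` integer matrix `B` of rank 2. -/
theorem stmt0 (N : ℕ) (hN : 0 < N) (C : Matrix (Fin N) (Fin N) ℤ) :
    (Cᵀ = -C ∧ (C.map (Int.cast : ℤ → ℚ)).rank = 2) ↔
      ∃ B : Matrix (Fin 2) (Fin N) ℤ,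
        (B.map (Int.cast : ℤ → ℚ)).rank = 2 ∧ C = Bᵀ * Jmat * B := by
  constructor
  · rintro ⟨h1, h2⟩
    exact forward_dir N C h1 h2
  · rintro ⟨B, hB, hC⟩
    exact backward_dir N C B hB hC
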